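/- Let a be a positive integer and define the rational function f̃₁(z) = 2 − (∏_{i=1}^{2a−1} (z − (2i+1))) / (∏_{i=1}^{2a} (z − 2i)) for z ∈ ℂ with ∏_{i=1}^{2a} (z − 2i) ≠ 0. Then f̃₁ preserves the upper and lower half planes: if Im z > 0 then Im f̃₁(z) > 0, and if Im z < 0 then Im f̃₁(z) < 0. -/

import Mathlib

open Complex Finset Polynomial

/-- The residue of the partial fraction at the pole `2k`. -/
noncomputable def resid (a k : ℕ) : ℝ :=
  (∏ i ∈ Finset.Icc 1 (2 * a - 1), (2 * (k : ℝ) - (2 * (i : ℝ) + 1))) *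
    (∏ j ∈ (Finset.Icc 1 (2 * a)).erase k, (2 * (k : ℝ) - 2 * (j : ℝ)))⁻¹

lemma resid_pos (a k : ℕ) (hk : k ∈ Finset.Icc 1 (2 * a)) : 0 < resid a k := by
  have hk1 : 1 ≤ k := (Finset.mem_Icc.mp hk).1
  have hk2 : k ≤ 2 * a := (Finset.mem_Icc.mp hk).2
  have hden : (∏ j ∈ (Finset.Icc 1 (2 * a)).erase k, (2 * (k : ℝ) - 2 * (j : ℝ)))
      = ∏ i ∈ Finset.Icc 1 (2 * a - 1),
          (2 * (k : ℝ) - 2 * ((if i < k then i else i + 1 : ℕ) : ℝ)) := by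
    refine (Finset.prod_nbij' (fun i => if i < k then i else i + 1)
      (fun j => if j < k then j else j - 1) ?_ ?_ ?_ ?_ ?_).symm
    · intro i hi
      have hi' := Finset.mem_Icc.mp hi
      by_cases h : i < k <;> simp [h, Finset.mem_erase, Finset.mem_Icc] <;> omega
    · intro j hj
      have hjk : j ≠ k := (Finset.mem_erase.mp hj).1
      have hj' := Finset.mem_Icc.mp (Finset.mem_erase.mp hj).2
      by_cases h : j < k <;> simp [h, Finset.mem_Icc] <;> omega
    · intro i hi
      have hi' := Finset.mem_Icc.mp hi
      split_ifs <;> omega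
    · intro j hj
      have hjk : j ≠ k := (Finset.mem_erase.mp hj).1
      have hj' := Finset.mem_Icc.mp (Finset.mem_erase.mp hj).2
      split_ifs <;> omega
    · intro i hi
      rfl
  rw [resid, hden, ← Finset.prod_inv_distrib, ← Finset.prod_mul_distrib]
  apply Finset.prod_pos
  intro i hi
  have hi' := Finset.mem_Icc.mp hi
  rw [← div_eq_mul_inv]
  by_cases h : i < k
  · simp only [h, if_pos]
    apply div_pos
    · have : (i : ℝ) + 1 ≤ (k : ℝ) := by exact_mod_cast h
      linarith
    · have : (i : ℝ) < (k : ℝ) := by exact_mod_cast h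
      linarith
  · simp only [h, if_neg, not_false_iff]
    have hki : (k : ℝ) ≤ (i : ℝ) := by exact_mod_cast not_lt.mp h
    rw [div_pos_iff]
    right
    constructor
    · linarith
    · push_cast
      linarith

lemma partial_fractions (a : ℕ) (ha : 0 < a) (z : ℂ)
    (hz : ∀ k ∈ Finset.Icc 1 (2 * a), z - 2 * (k : ℂ) ≠ 0) :
    (∏ i ∈ Finset.Icc 1 (2 * a - 1), (z - (2 * (i : ℂ) + 1))) /
      (∏ i ∈ Finset.Icc 1 (2 * a), (z - 2 * (i : ℂ)))
    = ∑ k ∈ Finset.Icc 1 (2 * a), (resid a k : ℂ) * (z - 2 * (k : ℂ))⁻¹ := by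
  set s : Finset ℕ := Finset.Icc 1 (2 * a) with hs
  set v : ℕ → ℂ := fun i => 2 * (i : ℂ) with hv
  have hvs : Set.InjOn v s := by
    intro i _ j _ h
    have : (i : ℂ) = (j : ℂ) := mul_left_cancel₀ two_ne_zero h
    exact_mod_cast this
  set P : Polynomial ℂ := ∏ i ∈ Finset.Icc 1 (2 * a - 1), (X - C (2 * (i : ℂ) + 1)) with hP
  have hdeg : P.degree < (s.card : WithBot ℕ) := by
    have h1 : P.degree = ((Finset.Icc 1 (2 * a - 1)).card : WithBot ℕ) := by
      rw [hP, Polynomial.degree_prod]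
      have hdc : ∀ i ∈ Finset.Icc 1 (2 * a - 1), (X - C (2 * (i : ℂ) + 1)).degree = 1 :=
        fun i _ => Polynomial.degree_X_sub_C _
      rw [Finset.sum_congr rfl hdc, Finset.sum_const, nsmul_eq_mul, mul_one]
    rw [h1, hs, Nat.card_Icc, Nat.card_Icc]
    exact_mod_cast (by omega : 2 * a - 1 + 1 - 1 < 2 * a + 1 - 1)
  have hx : ∀ i ∈ s, z ≠ v i := by
    intro i hi
    have := hz i hi
    intro h
    exact this (by rw [h]; ring)
  have heq := Lagrange.eq_interpolate hvs hdeg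
  have heval : P.eval z =
      (∏ i ∈ s, (z - v i)) * ∑ i ∈ s, Lagrange.nodalWeight s v i * (z - v i)⁻¹ * P.eval (v i) := by
    conv_lhs => rw [heq]
    rw [Lagrange.eval_interpolate_not_at_node _ hx, Lagrange.eval_nodal]
  have hD : (∏ i ∈ s, (z - v i)) ≠ 0 := Finset.prod_ne_zero_iff.mpr (fun i hi => hz i hi)
  have hPev : P.eval z = ∏ i ∈ Finset.Icc 1 (2 * a - 1), (z - (2 * (i : ℂ) + 1)) := by
    rw [hP, Polynomial.eval_prod]
    simp
  have hratio : (∏ i ∈ Finset.Icc 1 (2 * a - 1), (z - (2 * (i : ℂ) + 1))) /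
      (∏ i ∈ s, (z - v i))
      = ∑ i ∈ s, Lagrange.nodalWeight s v i * (z - v i)⁻¹ * P.eval (v i) := by
    rw [← hPev, heval]
    field_simp
  rw [show (∏ i ∈ Finset.Icc 1 (2 * a), (z - 2 * (i : ℂ))) = ∏ i ∈ s, (z - v i) from rfl,
    hratio]
  apply Finset.sum_congr rfl
  intro k hk
  have h1 : P.eval (v k) = ∏ i ∈ Finset.Icc 1 (2 * a - 1),
      ((2 * (k : ℝ) - (2 * (i : ℝ) + 1) : ℝ) : ℂ) := by
    rw [hP, Polynomial.eval_prod]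
    refine Finset.prod_congr rfl fun i _ => ?_
    simp only [hv, Polynomial.eval_sub, Polynomial.eval_X, Polynomial.eval_C]
    push_cast
    ring
  have h2 : Lagrange.nodalWeight s v k
      = (∏ j ∈ (Finset.Icc 1 (2 * a)).erase k, ((2 * (k : ℝ) - 2 * (j : ℝ) : ℝ) : ℂ))⁻¹ := by
    rw [Lagrange.nodalWeight]
    conv_rhs => rw [← Finset.prod_inv_distrib]
    refine Finset.prod_congr rfl fun j _ => ?_
    simp only [hv]
    push_cast
    ring
  have hresid : (resid a k : ℂ) = Lagrange.nodalWeight s v k * P.eval (v k) := by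
    rw [h1, h2, resid]
    push_cast
    ring
  rw [hresid]
  ring

theorem stmt_15 (a : ℕ) (ha : 0 < a) (z : ℂ)
    (hz : (∏ i ∈ Finset.Icc 1 (2 * a), (z - 2 * (i : ℂ))) ≠ 0) :
    (0 < z.im →
      0 < (2 - (∏ i ∈ Finset.Icc 1 (2 * a - 1), (z - (2 * (i : ℂ) + 1))) /
            (∏ i ∈ Finset.Icc 1 (2 * a), (z - 2 * (i : ℂ)))).im) ∧
    (z.im < 0 →
      (2 - (∏ i ∈ Finset.Icc 1 (2 * a - 1), (z - (2 * (i : ℂ) + 1))) /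
            (∏ i ∈ Finset.Icc 1 (2 * a), (z - 2 * (i : ℂ)))).im < 0) := by
  have hz' : ∀ k ∈ Finset.Icc 1 (2 * a), z - 2 * (k : ℂ) ≠ 0 := by
    intro k hk h
    exact hz (Finset.prod_eq_zero hk h)
  have hpf := partial_fractions a ha z hz'
  set T : ℝ := ∑ k ∈ Finset.Icc 1 (2 * a), resid a k / Complex.normSq (z - 2 * (k : ℂ)) with hT
  have hTpos : 0 < T := by
    apply Finset.sum_pos
    · intro k hk
      apply div_pos (resid_pos a k hk)
      exact Complex.normSq_pos.mpr (hz' k hk)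
    · exact ⟨1, Finset.mem_Icc.mpr ⟨le_refl 1, by omega⟩⟩
  have him : ((∏ i ∈ Finset.Icc 1 (2 * a - 1), (z - (2 * (i : ℂ) + 1))) /
      (∏ i ∈ Finset.Icc 1 (2 * a), (z - 2 * (i : ℂ)))).im = -z.im * T := by
    rw [hpf, Complex.im_sum, hT, Finset.mul_sum]
    apply Finset.sum_congr rfl
    intro k hk
    have h1 : (z - 2 * (k : ℂ)).im = z.im := by simp
    rw [Complex.mul_im, Complex.inv_im, h1]
    simp only [Complex.ofReal_re, Complex.ofReal_im, zero_mul, add_zero]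
    ring
  have hkey : (2 - (∏ i ∈ Finset.Icc 1 (2 * a - 1), (z - (2 * (i : ℂ) + 1))) /
      (∏ i ∈ Finset.Icc 1 (2 * a), (z - 2 * (i : ℂ)))).im = z.im * T := by
    rw [Complex.sub_im, him]
    norm_num
  constructor
  · intro h
    rw [hkey]
    positivity
  · intro h
    rw [hkey]
    exact mul_neg_of_neg_of_pos h hTpos
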